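/- Let X be a finite alphabet and c₀ a pseudo-metric on X ∪ {−}. Then for all trees x̄, ȳ over X, the pseudo edit distance evaluated at the default cost function equals the true tree edit distance: d̃_{c₀}(x̄, ȳ) = d_{c₀}(x̄, ȳ), where the edit script matrix P_{c₀}(x̄, ȳ) encodes a cheapest edit script under c₀. -/

import Mathlib

/-- A rooted ordered tree with labels from `X`. -/
inductive PTree (X : Type) : Type where
  | node : X → List (PTree X) → PTree X

namespace PTree

variable {X : Type}

mutual
  /-- The labels of a tree in pre-order. -/
  def preorder : PTree X → List X
    | .node l cs => l :: preorderF cs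
  /-- The labels of a forest in pre-order. -/
  def preorderF : List (PTree X) → List X
    | [] => []
    | t :: ts => preorder t ++ preorderF ts
end

/-- The size of a tree (number of nodes). -/
def size (t : PTree X) : ℕ := (preorder t).length

/-- `Deletes f g l` holds iff the forest `g` is obtained from the forest `f` by
deleting one node labeled `l`, attaching its children in its place. -/
inductive Deletes : List (PTree X) → List (PTree X) → X → Prop where
  | here (l : X) (cs rest : List (PTree X)) :
      Deletes (.node l cs :: rest) (cs ++ rest) l
  | child {cs cs' : List (PTree X)} {l : X} (z : X) (rest : List (PTree X)) :
      Deletes cs cs' l → Deletes (.node z cs :: rest) (.node z cs' :: rest) l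
  | skip {rest rest' : List (PTree X)} {l : X} (t : PTree X) :
      Deletes rest rest' l → Deletes (t :: rest) (t :: rest') l

/-- `Replaces f g l l'` holds iff the forest `g` is obtained from the forest `f` by
changing the label `l` of one node into `l'`. -/
inductive Replaces : List (PTree X) → List (PTree X) → X → X → Prop where
  | here (l l' : X) (cs rest : List (PTree X)) :
      Replaces (.node l cs :: rest) (.node l' cs :: rest) l l'
  | child {cs cs' : List (PTree X)} {l l' : X} (z : X) (rest : List (PTree X)) :
      Replaces cs cs' l l' → Replaces (.node z cs :: rest) (.node z cs' :: rest) l l'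
  | skip {rest rest' : List (PTree X)} {l l' : X} (t : PTree X) :
      Replaces rest rest' l l' → Replaces (t :: rest) (t :: rest') l l'

/-- `EditStep c f g r` holds iff one tree edit (a deletion, an insertion, or a
replacement) of cost `r` under the cost function `c` transforms the forest `f`
into the forest `g`. The gap symbol `−` is represented by `none`:
deleting label `l` costs `c (some l) none`, inserting label `l` costs
`c none (some l)`, and replacing label `l` by `l'` costs `c (some l) (some l')`.
An insertion is exactly the inverse of a deletion (the inserted node may adopt
a consecutive run of existing siblings as children). -/
inductive EditStep (c : Option X → Option X → ℝ) :
    List (PTree X) → List (PTree X) → ℝ → Prop where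
  | del {f g : List (PTree X)} {l : X} :
      Deletes f g l → EditStep c f g (c (some l) none)
  | ins {f g : List (PTree X)} {l : X} :
      Deletes g f l → EditStep c f g (c none (some l))
  | rep {f g : List (PTree X)} {l l' : X} :
      Replaces f g l l' → EditStep c f g (c (some l) (some l'))

/-- `Script c f g r` holds iff some edit script (finite sequence of edits) of
total cost `r` under the cost function `c` transforms the forest `f` into the
forest `g`. -/
inductive Script (c : Option X → Option X → ℝ) :
    List (PTree X) → List (PTree X) → ℝ → Prop where
  | nil (f : List (PTree X)) : Script c f f 0
  | cons {f g h : List (PTree X)} {r s : ℝ} :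
      EditStep c f g r → Script c g h s → Script c f h (r + s)

/-- The tree edit distance `d_c`: the infimum of the costs of all edit scripts
transforming the tree `x` into the tree `y`. -/
noncomputable def editDist (c : Option X → Option X → ℝ) (x y : PTree X) : ℝ :=
  sInf {r : ℝ | Script c [x] [y] r}

mutual
  /-- In pre-order: for every node of the tree, the size of the subtree rooted
  at that node. -/
  def subtreeSizes : PTree X → List ℕ
    | .node l cs => size (.node l cs) :: subtreeSizesF cs
  /-- In pre-order: for every node of the forest, the size of the subtree rooted
  at that node. -/
  def subtreeSizesF : List (PTree X) → List ℕ
    | [] => []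
    | t :: ts => subtreeSizes t ++ subtreeSizesF ts
end

/-- The label of the `i`-th node of `t` in pre-order (`0`-based). -/
def label (t : PTree X) (i : Fin (size t)) : X := (preorder t).get i

/-- The `i`-th node of `t` (in `0`-based pre-order) is an ancestor of the
`j`-th node, characterized via pre-order indices and subtree sizes. -/
def IsAncestor (t : PTree X) (i j : ℕ) : Prop :=
  i < j ∧ j < i + (subtreeSizes t).getD i 0

/-- A tree mapping between `x` and `y`: a set of pairs of (`0`-based pre-order)
node indices such that every index occurs in at most one pair, the mapping is
order-preserving, and it is ancestor-preserving. -/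
def IsTreeMapping (x y : PTree X) (M : Finset (Fin (size x) × Fin (size y))) : Prop :=
  ∀ p ∈ M, ∀ q ∈ M,
    (p.1 = q.1 ↔ p.2 = q.2) ∧ (p.1 < q.1 ↔ p.2 < q.2) ∧
    (IsAncestor x ↑p.1 ↑q.1 ↔ IsAncestor y ↑p.2 ↑q.2)

/-- The cost of a tree mapping `M` under the cost function `c`: matched pairs
of nodes pay the replacement cost, unmatched nodes of `x` pay the deletion
cost, unmatched nodes of `y` pay the insertion cost. -/
def mappingCost (c : Option X → Option X → ℝ) (x y : PTree X)
    (M : Finset (Fin (size x) × Fin (size y))) : ℝ :=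
  (∑ p ∈ M, c (some (label x p.1)) (some (label y p.2)))
    + (∑ i ∈ Finset.univ.filter (fun i : Fin (size x) => ∀ p ∈ M, p.1 ≠ i),
        c (some (label x i)) none)
    + (∑ j ∈ Finset.univ.filter (fun j : Fin (size y) => ∀ p ∈ M, p.2 ≠ j),
        c none (some (label y j)))

/-- The mapping distance `D_c` (the quantity computed by the dynamic
programming scheme of Zhang and Shasha): the minimal cost of a tree mapping
between `x` and `y`. -/
noncomputable def mapDist (c : Option X → Option X → ℝ) (x y : PTree X) : ℝ :=
  sInf {r : ℝ | ∃ M, IsTreeMapping x y M ∧ mappingCost c x y M = r}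

end PTree

/-- A pseudo-metric on a type `S`: non-negative, symmetric, zero on the
diagonal, and satisfying the triangle inequality. -/
def IsPseudoMetric {S : Type} (c : S → S → ℝ) : Prop :=
  (∀ a b, 0 ≤ c a b) ∧ (∀ a b, c a b = c b a) ∧ (∀ a, c a a = 0) ∧
    (∀ a b d, c a d ≤ c a b + c b d)

namespace PTree
variable {X : Type}

/-- Size of a forest. -/
def sizeF (f : List (PTree X)) : ℕ := (preorderF f).length

@[simp] lemma preorderF_nil : preorderF ([] : List (PTree X)) = [] := rfl
@[simp] lemma preorderF_cons (t : PTree X) (ts : List (PTree X)) :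
    preorderF (t :: ts) = preorder t ++ preorderF ts := rfl
@[simp] lemma preorder_node (l : X) (cs : List (PTree X)) :
    preorder (.node l cs) = l :: preorderF cs := rfl
@[simp] lemma subtreeSizesF_nil : subtreeSizesF ([] : List (PTree X)) = [] := rfl
@[simp] lemma subtreeSizesF_cons (t : PTree X) (ts : List (PTree X)) :
    subtreeSizesF (t :: ts) = subtreeSizes t ++ subtreeSizesF ts := rfl
@[simp] lemma subtreeSizes_node (l : X) (cs : List (PTree X)) :
    subtreeSizes (.node l cs) = size (.node l cs) :: subtreeSizesF cs := rfl

lemma preorderF_append (a b : List (PTree X)) :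
    preorderF (a ++ b) = preorderF a ++ preorderF b := by
  induction a with
  | nil => simp
  | cons t ts ih => simp [ih]

lemma subtreeSizesF_append (a b : List (PTree X)) :
    subtreeSizesF (a ++ b) = subtreeSizesF a ++ subtreeSizesF b := by
  induction a with
  | nil => simp
  | cons t ts ih => simp [ih]

@[simp] lemma sizeF_cons (t : PTree X) (ts : List (PTree X)) :
    sizeF (t :: ts) = size t + sizeF ts := by
  simp [sizeF, size]

@[simp] lemma sizeF_nil : sizeF ([] : List (PTree X)) = 0 := rfl

lemma sizeF_append (a b : List (PTree X)) : sizeF (a ++ b) = sizeF a + sizeF b := by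
  simp [sizeF, preorderF_append]

lemma size_pos (t : PTree X) : 0 < size t := by
  cases t; simp [size]

mutual
theorem length_subtreeSizes (t : PTree X) : (subtreeSizes t).length = size t := by
  cases t with
  | node l cs => simp [size, length_subtreeSizesF cs, sizeF]
theorem length_subtreeSizesF (f : List (PTree X)) : (subtreeSizesF f).length = sizeF f := by
  cases f with
  | nil => rfl
  | cons t ts => simp [length_subtreeSizes t, length_subtreeSizesF ts]
end

end PTree
-- (appended)
namespace PTree
variable {X : Type}
@[simp] lemma size_node (z : X) (cs : List (PTree X)) :
    size (.node z cs) = sizeF cs + 1 := by simp [size, sizeF]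
end PTree
namespace PTree
variable {X : Type}

/-- Ancestor relation inside a forest, via pre-order indices. -/
def AncF (f : List (PTree X)) (i j : ℕ) : Prop :=
  i < j ∧ j < i + (subtreeSizesF f).getD i 0

mutual
theorem fits (t : PTree X) : ∀ i < size t, i + (subtreeSizes t).getD i 0 ≤ size t := by
  cases t with
  | node l cs =>
    intro i hi
    cases i with
    | zero => simp
    | succ i =>
      have h := fitsF cs i (by simpa [size, sizeF] using hi)
      simp only [subtreeSizes_node, List.getD_cons_succ]
      simp [size, sizeF] at h ⊢
      omega
theorem fitsF (f : List (PTree X)) : ∀ i < sizeF f, i + (subtreeSizesF f).getD i 0 ≤ sizeF f := by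
  cases f with
  | nil => intro i hi; simp at hi
  | cons t ts =>
    intro i hi
    by_cases h : i < size t
    · have := fits t i h
      rw [subtreeSizesF_cons, List.getD_append _ _ _ _ (by rwa [length_subtreeSizes])]
      simp only [sizeF_cons]; omega
    · have h2 := fitsF ts (i - size t) (by simp at hi; omega)
      rw [subtreeSizesF_cons, List.getD_append_right _ _ _ _ (by rw [length_subtreeSizes]; omega),
        length_subtreeSizes]
      simp only [sizeF_cons]; omega
end

mutual
theorem sizes_pos (t : PTree X) : ∀ i < size t, 0 < (subtreeSizes t).getD i 0 := by
  cases t with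
  | node l cs =>
    intro i hi
    cases i with
    | zero => simpa using size_pos (.node l cs)
    | succ i =>
      have h := sizesF_pos cs i (by simpa [size, sizeF] using hi)
      simpa using h
theorem sizesF_pos (f : List (PTree X)) : ∀ i < sizeF f, 0 < (subtreeSizesF f).getD i 0 := by
  cases f with
  | nil => intro i hi; simp at hi
  | cons t ts =>
    intro i hi
    by_cases h : i < size t
    · have := sizes_pos t i h
      rwa [subtreeSizesF_cons, List.getD_append _ _ _ _ (by rwa [length_subtreeSizes])]
    · have h2 := sizesF_pos ts (i - size t) (by simp at hi; omega)
      rw [subtreeSizesF_cons, List.getD_append_right _ _ _ _ (by rw [length_subtreeSizes]; omega),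
        length_subtreeSizes]
      exact h2
end

/-- Adjusted subtree-size list after deleting the node at index `k`. -/
def adj : ℕ → List ℕ → List ℕ
  | _, [] => []
  | 0, _ :: t => t
  | (k+1), s :: t => (if k+1 < s then s-1 else s) :: adj k t

@[simp] lemma adj_nil (k : ℕ) : adj k ([] : List ℕ) = [] := by cases k <;> rfl
@[simp] lemma adj_zero_cons (s : ℕ) (t : List ℕ) : adj 0 (s :: t) = t := rfl
@[simp] lemma adj_succ_cons (k s : ℕ) (t : List ℕ) :
    adj (k+1) (s :: t) = (if k+1 < s then s-1 else s) :: adj k t := rfl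

lemma length_adj (k : ℕ) (L : List ℕ) (h : k < L.length) :
    (adj k L).length = L.length - 1 := by
  induction L generalizing k with
  | nil => simp at h
  | cons s t ih =>
    cases k with
    | zero => simp
    | succ k =>
      have hk : k < t.length := by simpa using h
      simp [ih k hk]; omega

lemma adj_append_of_lt {k : ℕ} {A : List ℕ} (h : k < A.length) (B : List ℕ) :
    adj k (A ++ B) = adj k A ++ B := by
  induction A generalizing k with
  | nil => simp at h
  | cons s t ih =>
    cases k with
    | zero => simp
    | succ k => simp [ih (by simpa using h)]

lemma adj_append_of_fits {A : List ℕ} (hA : ∀ i < A.length, i + A.getD i 0 ≤ A.length)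
    (k : ℕ) (B : List ℕ) : adj (A.length + k) (A ++ B) = A ++ adj k B := by
  induction A with
  | nil => simp
  | cons s t ih =>
    have h0 : s ≤ t.length + 1 := by simpa using hA 0 (by simp)
    have : t.length + 1 + k = (t.length + k) + 1 := by omega
    rw [List.cons_append, List.length_cons, this, adj_succ_cons,
      if_neg (by omega), ih (fun i hi => by
        have := hA (i+1) (by simpa using hi)
        simp only [List.getD_cons_succ, List.length_cons] at this; omega)]
    simp

lemma adj_getD_lt {k m : ℕ} (L : List ℕ) (h : m < k) :
    (adj k L).getD m 0 = if k < m + L.getD m 0 then L.getD m 0 - 1 else L.getD m 0 := by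
  induction L generalizing k m with
  | nil => simp only [adj_nil]; split <;> simp
  | cons s t ih =>
    cases k with
    | zero => omega
    | succ k =>
      cases m with
      | zero => simp
      | succ m =>
        rw [adj_succ_cons, List.getD_cons_succ, List.getD_cons_succ, ih (show m < k by omega)]
        by_cases hc : k < m + t.getD m 0
        · rw [if_pos hc, if_pos (by omega)]
        · rw [if_neg hc, if_neg (by omega)]

lemma adj_getD_ge {k m : ℕ} (L : List ℕ) (h : k ≤ m) :
    (adj k L).getD m 0 = L.getD (m+1) 0 := by
  induction L generalizing k m with
  | nil => simp
  | cons s t ih =>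
    cases k with
    | zero => simp
    | succ k =>
      cases m with
      | zero => omega
      | succ m => simpa using ih (by omega)

/-- The index data of a deletion: node `k` with label `l` is removed. -/
def DelData (f g : List (PTree X)) (l : X) (k : ℕ) : Prop :=
  k < sizeF f ∧ (preorderF f)[k]? = some l ∧
    preorderF g = (preorderF f).eraseIdx k ∧
    subtreeSizesF g = adj k (subtreeSizesF f)

lemma delData_here (l : X) (cs rest : List (PTree X)) :
    DelData (.node l cs :: rest) (cs ++ rest) l 0 := by
  refine ⟨by simp, by simp, by simp [preorderF_append], ?_⟩
  simp [subtreeSizesF_append]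

lemma delData_child {cs cs' : List (PTree X)} {l : X} {k : ℕ} (z : X)
    (rest : List (PTree X)) (h : DelData cs cs' l k) :
    DelData (.node z cs :: rest) (.node z cs' :: rest) l (k + 1) := by
  obtain ⟨hk, hget, hpre, hsz⟩ := h
  have hklen : k < (preorderF cs).length := by simpa [sizeF] using hk
  refine ⟨by simp; omega, ?_, ?_, ?_⟩
  · simp only [preorderF_cons, preorder_node, List.cons_append, List.getElem?_cons_succ]
    rw [List.getElem?_append_left hklen]
    exact hget
  · simp only [preorderF_cons, preorder_node, List.cons_append, List.eraseIdx_cons_succ]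
    rw [List.eraseIdx_append_of_lt_length hklen]
    simp [hpre]
  · have hlen : k < (subtreeSizesF cs).length := by rwa [length_subtreeSizesF]
    simp only [subtreeSizesF_cons, subtreeSizes_node, List.cons_append, adj_succ_cons]
    rw [adj_append_of_lt hlen]
    have hszg : sizeF cs' = sizeF cs - 1 := by
      have h1 : sizeF cs' = ((preorderF cs).eraseIdx k).length := by rw [sizeF, hpre]
      rw [h1, List.length_eraseIdx, if_pos hklen]; rfl
    rw [if_pos (by simp; omega)]
    rw [hsz]
    congr 1
    simp [hszg]; omega

lemma delData_skip {rest rest' : List (PTree X)} {l : X} {k : ℕ} (t : PTree X)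
    (h : DelData rest rest' l k) :
    DelData (t :: rest) (t :: rest') l (size t + k) := by
  obtain ⟨hk, hget, hpre, hsz⟩ := h
  refine ⟨by simp only [sizeF_cons]; omega, ?_, ?_, ?_⟩
  · rw [preorderF_cons, List.getElem?_append_right (by simp only [size]; omega)]
    have : size t + k - (preorder t).length = k := by simp only [size]; omega
    rw [this]; exact hget
  · rw [preorderF_cons, preorderF_cons,
      List.eraseIdx_append_of_length_le (by simp only [size]; omega)]
    have : size t + k - (preorder t).length = k := by simp only [size]; omega
    rw [this, hpre]
  · rw [subtreeSizesF_cons, subtreeSizesF_cons]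
    have he : size t + k = (subtreeSizes t).length + k := by rw [length_subtreeSizes]
    rw [he, adj_append_of_fits, hsz]
    intro i hi
    rw [length_subtreeSizes] at hi ⊢
    exact fits t i hi

theorem deletes_spec {f g : List (PTree X)} {l : X} (h : Deletes f g l) :
    ∃ k, DelData f g l k := by
  induction h with
  | here l cs rest => exact ⟨0, delData_here l cs rest⟩
  | child z rest h ih => obtain ⟨k, hk⟩ := ih; exact ⟨k+1, delData_child z rest hk⟩
  | skip t h ih => obtain ⟨k, hk⟩ := ih; exact ⟨size t + k, delData_skip t hk⟩

mutual
theorem deletes_exists_t (t : PTree X) : ∀ k < size t, ∀ rest : List (PTree X),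
    ∃ g l, Deletes (t :: rest) g l ∧ DelData (t :: rest) g l k := by
  cases t with
  | node z cs =>
    intro k hk rest
    cases k with
    | zero => exact ⟨cs ++ rest, z, Deletes.here z cs rest, delData_here z cs rest⟩
    | succ k =>
      obtain ⟨g, l, hd, hdat⟩ := deletes_exists_f cs k (by simpa using hk)
      exact ⟨_, l, Deletes.child z rest hd, delData_child z rest hdat⟩
theorem deletes_exists_f (f : List (PTree X)) : ∀ k < sizeF f,
    ∃ g l, Deletes f g l ∧ DelData f g l k := by
  cases f with
  | nil => intro k hk; simp at hk
  | cons t ts =>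
    intro k hk
    by_cases h : k < size t
    · exact deletes_exists_t t k h ts
    · obtain ⟨g, l, hd, hdat⟩ := deletes_exists_f ts (k - size t) (by simp at hk; omega)
      refine ⟨t :: g, l, Deletes.skip t hd, ?_⟩
      have := delData_skip t hdat
      rwa [show size t + (k - size t) = k by omega] at this
end

theorem replaces_spec {f g : List (PTree X)} {l l' : X} (h : Replaces f g l l') :
    ∃ k, k < sizeF f ∧ (preorderF f)[k]? = some l ∧
      preorderF g = (preorderF f).set k l' ∧
      subtreeSizesF g = subtreeSizesF f := by
  induction h with
  | here la lb cs rest =>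
    exact ⟨0, by simp, by simp, by simp, by simp⟩
  | child z rest h ih =>
    obtain ⟨k, hk, hget, hpre, hsz⟩ := ih
    rename_i cs cs' la lb
    have hklen : k < (preorderF cs).length := by simpa [sizeF] using hk
    refine ⟨k + 1, by simp; omega, ?_, ?_, ?_⟩
    · simp only [preorderF_cons, preorder_node, List.cons_append, List.getElem?_cons_succ]
      rw [List.getElem?_append_left hklen]
      exact hget
    · simp only [preorderF_cons, preorder_node, List.cons_append, List.set_cons_succ]
      rw [List.set_append, if_pos hklen, hpre]
    · have hsame : sizeF cs' = sizeF cs := by simp [sizeF, hpre]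
      simp only [subtreeSizesF_cons, subtreeSizes_node, hsz]
      congr 2
      simp [hsame]
  | skip t h ih =>
    obtain ⟨k, hk, hget, hpre, hsz⟩ := ih
    refine ⟨size t + k, by simp only [sizeF_cons]; omega, ?_, ?_, ?_⟩
    · rw [preorderF_cons, List.getElem?_append_right (by simp only [size]; omega)]
      have : size t + k - (preorder t).length = k := by simp only [size]; omega
      rw [this]; exact hget
    · rw [preorderF_cons, preorderF_cons, List.set_append,
        if_neg (by simp only [size]; omega)]
      have : size t + k - (preorder t).length = k := by simp only [size]; omega
      rw [this, hpre]
    · simp [hsz]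

end PTree
namespace PTree
variable {X : Type} {c : Option X → Option X → ℝ}

theorem Script.trans {f g h : List (PTree X)} {r s : ℝ}
    (h1 : Script c f g r) (h2 : Script c g h s) : Script c f h (r + s) := by
  induction h1 with
  | nil => simpa using h2
  | cons e _ ih =>
    rw [add_assoc]
    exact Script.cons e (ih h2)

theorem Script.single {f g : List (PTree X)} {r : ℝ} (e : EditStep c f g r) :
    Script c f g r := by
  have := Script.cons e (Script.nil g)
  simpa using this

theorem EditStep.childLift {f g : List (PTree X)} {r : ℝ} (z : X)
    (rest : List (PTree X)) (e : EditStep c f g r) :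
    EditStep c (.node z f :: rest) (.node z g :: rest) r := by
  cases e with
  | del h => exact .del (h.child z rest)
  | ins h => exact .ins (h.child z rest)
  | rep h => exact .rep (h.child z rest)

theorem EditStep.skipLift {f g : List (PTree X)} {r : ℝ} (t : PTree X)
    (e : EditStep c f g r) : EditStep c (t :: f) (t :: g) r := by
  cases e with
  | del h => exact .del (h.skip t)
  | ins h => exact .ins (h.skip t)
  | rep h => exact .rep (h.skip t)

theorem Script.childLift {f g : List (PTree X)} {r : ℝ} (z : X)
    (rest : List (PTree X)) (h : Script c f g r) :
    Script c (.node z f :: rest) (.node z g :: rest) r := by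
  induction h with
  | nil f => exact Script.nil _
  | cons e _ ih => exact Script.cons (e.childLift z rest) ih

theorem Script.skipLift {f g : List (PTree X)} {r : ℝ} (t : PTree X)
    (h : Script c f g r) : Script c (t :: f) (t :: g) r := by
  induction h with
  | nil f => exact Script.nil _
  | cons e _ ih => exact Script.cons (e.skipLift t) ih

theorem EditStep.nonneg {f g : List (PTree X)} {r : ℝ}
    (hc : ∀ a b, 0 ≤ c a b) (e : EditStep c f g r) : 0 ≤ r := by
  cases e <;> apply hc

theorem Script.nonneg {f g : List (PTree X)} {r : ℝ}
    (hc : ∀ a b, 0 ≤ c a b) (h : Script c f g r) : 0 ≤ r := by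
  induction h with
  | nil => exact le_refl 0
  | cons e _ ih => exact add_nonneg (e.nonneg hc) ih

mutual
theorem scriptRep_t (t u : PTree X) (h : subtreeSizes t = subtreeSizes u)
    (rest : List (PTree X)) :
    Script c (t :: rest) (u :: rest)
      ((List.zipWith (fun a b => c (some a) (some b)) (preorder t) (preorder u)).sum) := by
  cases t with
  | node a cs =>
    cases u with
    | node b ds =>
      have htl : subtreeSizesF cs = subtreeSizesF ds := by
        simpa using congrArg List.tail h
      have hs := scriptRep_f cs ds htl
      simp only [preorder_node, List.zipWith_cons_cons, List.sum_cons]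
      exact Script.cons (EditStep.rep (Replaces.here a b cs rest))
        (hs.childLift b rest)
theorem scriptRep_f (f g : List (PTree X)) (h : subtreeSizesF f = subtreeSizesF g) :
    Script c f g
      ((List.zipWith (fun a b => c (some a) (some b)) (preorderF f) (preorderF g)).sum) := by
  cases f with
  | nil =>
    cases g with
    | nil => exact Script.nil []
    | cons u us =>
      exfalso
      have := congrArg List.length h
      rw [length_subtreeSizesF, length_subtreeSizesF] at this
      simp at this
      have := size_pos u
      omega
  | cons t ts =>
    cases g with
    | nil =>
      exfalso
      have := congrArg List.length h
      rw [length_subtreeSizesF, length_subtreeSizesF] at this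
      simp at this
      have := size_pos t
      omega
    | cons u us =>
      have hsz : size t = size u := by
        cases t with | node a cs => cases u with | node b ds =>
          simpa using congrArg (fun L => L.headD 0) h
      have hlen : (subtreeSizes t).length = (subtreeSizes u).length := by
        rw [length_subtreeSizes, length_subtreeSizes, hsz]
      have hsplit := List.append_inj (by simpa using h) hlen
      have h1 := scriptRep_t t u hsplit.1 ts
      have h2 := (scriptRep_f ts us hsplit.2).skipLift u
      have h3 := h1.trans h2
      have hpl : (preorder t).length = (preorder u).length := hsz
      simp only [preorderF_cons]
      rw [List.zipWith_append hpl, List.sum_append]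
      exact h3
end

end PTree
namespace PTree
variable {X : Type} {c : Option X → Option X → ℝ}

/-- Index shift: position in the smaller forest to position in the larger one. -/
def psi (k m : ℕ) : ℕ := if m < k then m else m + 1
/-- Index shift: position in the larger forest to position in the smaller one. -/
def delta (k i : ℕ) : ℕ := if i < k then i else i - 1

lemma psi_ne (k m : ℕ) : psi k m ≠ k := by unfold psi; split_ifs <;> omega
lemma psi_inj {k a b : ℕ} (h : psi k a = psi k b) : a = b := by
  unfold psi at h; split_ifs at h <;> omega
lemma psi_lt_iff {k a b : ℕ} : psi k a < psi k b ↔ a < b := by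
  unfold psi; split_ifs <;> omega
lemma psi_delta {k i : ℕ} (h : i ≠ k) : psi k (delta k i) = i := by
  unfold psi delta; split_ifs <;> omega
lemma delta_psi (k m : ℕ) : delta k (psi k m) = m := by
  unfold psi delta; split_ifs <;> omega

lemma DelData.size_eq {f g : List (PTree X)} {l : X} {k : ℕ} (h : DelData f g l k) :
    sizeF g = sizeF f - 1 := by
  obtain ⟨hk, _, hpre, _⟩ := h
  have : sizeF g = ((preorderF f).eraseIdx k).length := by rw [sizeF, hpre]
  rw [this, List.length_eraseIdx, if_pos (by simpa [sizeF] using hk)]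
  rfl

lemma DelData.get {f g : List (PTree X)} {l : X} {k : ℕ} (h : DelData f g l k)
    (m : ℕ) : (preorderF g)[m]? = (preorderF f)[psi k m]? := by
  rw [h.2.2.1, List.getElem?_eraseIdx]
  unfold psi
  split_ifs <;> rfl

lemma DelData.anc {f g : List (PTree X)} {l : X} {k : ℕ} (h : DelData f g l k)
    {m m' : ℕ} (hm : m < sizeF g) :
    AncF g m m' ↔ AncF f (psi k m) (psi k m') := by
  have hszeq := h.size_eq
  obtain ⟨hk, hget, hpre, hsz⟩ := h
  have hmf : m < sizeF f := by omega
  have hpos : 0 < (subtreeSizesF f).getD m 0 := sizesF_pos f m hmf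
  unfold AncF psi
  rw [hsz]
  by_cases h1 : m < k
  · rw [adj_getD_lt _ h1]
    split_ifs <;> omega
  · rw [adj_getD_ge _ (by omega)]
    split_ifs <;> omega

/-- A (forest) tree mapping, with indices in `ℕ`. -/
def IsMapF (f g : List (PTree X)) (M : Finset (ℕ × ℕ)) : Prop :=
  (∀ p ∈ M, p.1 < sizeF f ∧ p.2 < sizeF g) ∧
    ∀ p ∈ M, ∀ q ∈ M, (p.1 = q.1 ↔ p.2 = q.2) ∧ (p.1 < q.1 ↔ p.2 < q.2) ∧
      (AncF f p.1 q.1 ↔ AncF g p.2 q.2)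

/-- Cost of a forest tree mapping. -/
noncomputable def costF (c : Option X → Option X → ℝ) (f g : List (PTree X))
    (M : Finset (ℕ × ℕ)) : ℝ :=
  (∑ p ∈ M, c (preorderF f)[p.1]? (preorderF g)[p.2]?)
    + (∑ i ∈ (Finset.range (sizeF f)).filter (fun i => ∀ p ∈ M, p.1 ≠ i),
        c (preorderF f)[i]? none)
    + (∑ j ∈ (Finset.range (sizeF g)).filter (fun j => ∀ p ∈ M, p.2 ≠ j),
        c none (preorderF g)[j]?)

lemma cost_del {f g : List (PTree X)} {l : X} {k : ℕ} (h : DelData f g l k)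
    (y : List (PTree X)) (N : Finset (ℕ × ℕ)) :
    costF c f y (N.image (fun p => (psi k p.1, p.2))) =
      c (some l) none + costF c g y N := by
  have hszeq := h.size_eq
  have hk := h.1
  have hget := h.2.1
  set M := N.image (fun p : ℕ × ℕ => (psi k p.1, p.2)) with hM
  have hinj : ∀ p ∈ N, ∀ q ∈ N,
      (fun p : ℕ × ℕ => (psi k p.1, p.2)) p = (fun p : ℕ × ℕ => (psi k p.1, p.2)) q → p = q := by
    intro p _ q _ hpq
    simp only [Prod.mk.injEq] at hpq
    exact Prod.ext (psi_inj hpq.1) hpq.2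
  have hS1 : (∑ p ∈ M, c (preorderF f)[p.1]? (preorderF y)[p.2]?)
      = ∑ p ∈ N, c (preorderF g)[p.1]? (preorderF y)[p.2]? := by
    rw [hM, Finset.sum_image hinj]
    exact Finset.sum_congr rfl (fun p _ => by rw [h.get])
  have hset : (Finset.range (sizeF f)).filter (fun i => ∀ p ∈ M, p.1 ≠ i)
      = insert k (((Finset.range (sizeF g)).filter (fun i => ∀ p ∈ N, p.1 ≠ i)).image (psi k)) := by
    ext i
    simp only [Finset.mem_filter, Finset.mem_range, Finset.mem_insert, Finset.mem_image, hM]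
    constructor
    · rintro ⟨hi, hun⟩
      by_cases hik : i = k
      · exact Or.inl hik
      · refine Or.inr ⟨delta k i, ⟨⟨?_, ?_⟩, psi_delta hik⟩⟩
        · unfold delta; split_ifs <;> omega
        · intro q hq hq1
          exact (hun (psi k q.1, q.2) ⟨q, hq, rfl⟩) (by rw [show (psi k q.1, q.2).1 = psi k q.1 from rfl, hq1]; exact psi_delta hik)
    · rintro (hik | ⟨m, ⟨⟨hm, hun⟩, rfl⟩⟩)
      · refine ⟨by omega, ?_⟩
        rintro p ⟨q, hq, rfl⟩
        rw [hik]
        exact psi_ne k q.1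
      · refine ⟨?_, ?_⟩
        · unfold psi; split_ifs <;> omega
        · rintro p ⟨q, hq, rfl⟩
          intro hcon
          exact hun q hq (psi_inj hcon)
  have hS2 : (∑ i ∈ (Finset.range (sizeF f)).filter (fun i => ∀ p ∈ M, p.1 ≠ i),
        c (preorderF f)[i]? none)
      = c (some l) none + ∑ i ∈ (Finset.range (sizeF g)).filter (fun i => ∀ p ∈ N, p.1 ≠ i),
          c (preorderF g)[i]? none := by
    rw [hset, Finset.sum_insert (by
      simp only [Finset.mem_image]
      rintro ⟨m, -, hcon⟩
      exact psi_ne k m hcon)]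
    rw [Finset.sum_image (fun a _ b _ hab => psi_inj hab), hget]
    congr 1
    exact Finset.sum_congr rfl (fun i _ => by rw [h.get])
  have hS3 : (Finset.range (sizeF y)).filter (fun j => ∀ p ∈ M, p.2 ≠ j)
      = (Finset.range (sizeF y)).filter (fun j => ∀ p ∈ N, p.2 ≠ j) := by
    ext j
    simp only [Finset.mem_filter, hM, Finset.mem_image]
    constructor
    · rintro ⟨hj, hun⟩
      exact ⟨hj, fun q hq => hun (psi k q.1, q.2) ⟨q, hq, rfl⟩⟩
    · rintro ⟨hj, hun⟩
      exact ⟨hj, by rintro p ⟨q, hq, rfl⟩; exact hun q hq⟩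
  unfold costF
  rw [hS1, hS2, hS3]
  ring

end PTree
namespace PTree
variable {X : Type} {c : Option X → Option X → ℝ}

lemma IsMapF.uniq1 {f g : List (PTree X)} {M : Finset (ℕ × ℕ)} (hN : IsMapF f g M)
    {p q : ℕ × ℕ} (hp : p ∈ M) (hq : q ∈ M) (h : p.1 = q.1) : p = q :=
  Prod.ext h ((hN.2 p hp q hq).1.mp h)

lemma IsMapF.uniq2 {f g : List (PTree X)} {M : Finset (ℕ × ℕ)} (hN : IsMapF f g M)
    {p q : ℕ × ℕ} (hp : p ∈ M) (hq : q ∈ M) (h : p.2 = q.2) : p = q :=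
  Prod.ext ((hN.2 p hp q hq).1.mpr h) h

lemma isMapF_del {f g y : List (PTree X)} {l : X} {k : ℕ} (h : DelData f g l k)
    {N : Finset (ℕ × ℕ)} (hN : IsMapF g y N) :
    IsMapF f y (N.image (fun p => (psi k p.1, p.2))) := by
  have hsz := h.size_eq
  have hk := h.1
  constructor
  · intro p hp
    obtain ⟨q, hq, rfl⟩ := Finset.mem_image.mp hp
    have := hN.1 q hq
    refine ⟨?_, this.2⟩
    show psi k q.1 < sizeF f
    unfold psi; split_ifs <;> omega
  · intro p hp p' hp'
    obtain ⟨q, hq, rfl⟩ := Finset.mem_image.mp hp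
    obtain ⟨q', hq', rfl⟩ := Finset.mem_image.mp hp'
    obtain ⟨h1, h2, h3⟩ := hN.2 q hq q' hq'
    refine ⟨⟨fun e => h1.mp (psi_inj e), fun e => by
      show psi k q.1 = psi k q'.1; rw [h1.mpr e]⟩, psi_lt_iff.trans h2, ?_⟩
    exact ((h.anc (hN.1 q hq).1).symm.trans h3)

lemma delta_lt {k i n : ℕ} (hi : i < n) (hik : i ≠ k) (hk : k < n) :
    delta k i < n - 1 := by unfold delta; split_ifs <;> omega

lemma isMapF_ins {f g y : List (PTree X)} {l : X} {k : ℕ} (h : DelData g f l k)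
    {N : Finset (ℕ × ℕ)} (hN : IsMapF g y N) :
    IsMapF f y ((N.filter (fun p => p.1 ≠ k)).image (fun p => (delta k p.1, p.2))) := by
  have hsz := h.size_eq
  have hk := h.1
  constructor
  · intro p hp
    obtain ⟨q, hq, rfl⟩ := Finset.mem_image.mp hp
    rw [Finset.mem_filter] at hq
    have := hN.1 q hq.1
    exact ⟨by rw [hsz]; exact delta_lt this.1 hq.2 hk, this.2⟩
  · intro p hp p' hp'
    obtain ⟨q, hq, rfl⟩ := Finset.mem_image.mp hp
    obtain ⟨q', hq', rfl⟩ := Finset.mem_image.mp hp'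
    rw [Finset.mem_filter] at hq hq'
    obtain ⟨h1, h2, h3⟩ := hN.2 q hq.1 q' hq'.1
    have e1 : psi k (delta k q.1) = q.1 := psi_delta hq.2
    have e2 : psi k (delta k q'.1) = q'.1 := psi_delta hq'.2
    have hdb : delta k q.1 < sizeF f := by rw [hsz]; exact delta_lt (hN.1 q hq.1).1 hq.2 hk
    refine ⟨⟨fun e => h1.mp (by rw [← e1, ← e2]; exact congrArg (psi k) e), fun e => ?_⟩, ?_, ?_⟩
    · show delta k q.1 = delta k q'.1
      have := h1.mpr e
      rw [← e1, ← e2] at this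
      exact psi_inj this
    · show delta k q.1 < delta k q'.1 ↔ _
      rw [← psi_lt_iff (k := k), e1, e2]
      exact h2
    · have := h.anc (m := delta k q.1) (m' := delta k q'.1) hdb
      rw [e1, e2] at this
      exact this.trans h3

lemma isMapF_of_sizes_eq {f g y : List (PTree X)}
    (hsz : subtreeSizesF f = subtreeSizesF g) {N : Finset (ℕ × ℕ)}
    (hN : IsMapF g y N) : IsMapF f y N := by
  have hn : sizeF f = sizeF g := by
    rw [← length_subtreeSizesF, ← length_subtreeSizesF, hsz]
  unfold IsMapF AncF
  rw [hsz, hn]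
  exact hN

lemma isMapF_swap {f g : List (PTree X)} {M : Finset (ℕ × ℕ)} (hM : IsMapF f g M) :
    IsMapF g f (M.image Prod.swap) := by
  constructor
  · intro p hp
    obtain ⟨q, hq, rfl⟩ := Finset.mem_image.mp hp
    exact ⟨(hM.1 q hq).2, (hM.1 q hq).1⟩
  · intro p hp p' hp'
    obtain ⟨q, hq, rfl⟩ := Finset.mem_image.mp hp
    obtain ⟨q', hq', rfl⟩ := Finset.mem_image.mp hp'
    obtain ⟨h1, h2, h3⟩ := hM.2 q hq q' hq'
    exact ⟨h1.symm, h2.symm, h3.symm⟩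

lemma costF_swap (c : Option X → Option X → ℝ) (f g : List (PTree X))
    (M : Finset (ℕ × ℕ)) :
    costF c f g M = costF (fun a b => c b a) g f (M.image Prod.swap) := by
  have hswap : ∀ p ∈ M, ∀ q ∈ M, Prod.swap p = Prod.swap q → p = q :=
    fun p _ q _ h => Prod.swap_injective h
  have e1 : (∑ p ∈ M.image Prod.swap,
      (fun a b => c b a) (preorderF g)[p.1]? (preorderF f)[p.2]?)
      = ∑ p ∈ M, c (preorderF f)[p.1]? (preorderF g)[p.2]? := by
    rw [Finset.sum_image hswap]
    exact Finset.sum_congr rfl (fun p _ => rfl)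
  have e2 : (Finset.range (sizeF g)).filter (fun i => ∀ p ∈ M.image Prod.swap, p.1 ≠ i)
      = (Finset.range (sizeF g)).filter (fun j => ∀ p ∈ M, p.2 ≠ j) := by
    ext j
    simp only [Finset.mem_filter, Finset.mem_image]
    constructor
    · rintro ⟨hj, hun⟩
      exact ⟨hj, fun q hq => hun q.swap ⟨q, hq, rfl⟩⟩
    · rintro ⟨hj, hun⟩
      exact ⟨hj, by rintro p ⟨q, hq, rfl⟩; exact hun q hq⟩
  have e3 : (Finset.range (sizeF f)).filter (fun i => ∀ p ∈ M.image Prod.swap, p.2 ≠ i)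
      = (Finset.range (sizeF f)).filter (fun i => ∀ p ∈ M, p.1 ≠ i) := by
    ext j
    simp only [Finset.mem_filter, Finset.mem_image]
    constructor
    · rintro ⟨hj, hun⟩
      exact ⟨hj, fun q hq => hun q.swap ⟨q, hq, rfl⟩⟩
    · rintro ⟨hj, hun⟩
      exact ⟨hj, by rintro p ⟨q, hq, rfl⟩; exact hun q hq⟩
  unfold costF
  rw [e1, e2, e3]
  ring

/-- The identity mapping on indices. -/
def idMap (n : ℕ) : Finset (ℕ × ℕ) := (Finset.range n).image (fun i => (i, i))

lemma isMapF_id (f : List (PTree X)) : IsMapF f f (idMap (sizeF f)) := by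
  constructor
  · intro p hp
    obtain ⟨i, hi, rfl⟩ := Finset.mem_image.mp hp
    rw [Finset.mem_range] at hi
    exact ⟨hi, hi⟩
  · intro p hp q hq
    obtain ⟨i, hi, rfl⟩ := Finset.mem_image.mp hp
    obtain ⟨j, hj, rfl⟩ := Finset.mem_image.mp hq
    exact ⟨Iff.rfl, Iff.rfl, Iff.rfl⟩

lemma costF_idMap (c : Option X → Option X → ℝ) (f g : List (PTree X))
    (hfg : sizeF g = sizeF f) :
    costF c f g (idMap (sizeF f)) =
      ∑ i ∈ Finset.range (sizeF f), c (preorderF f)[i]? (preorderF g)[i]? := by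
  have hinj : ∀ a ∈ Finset.range (sizeF f), ∀ b ∈ Finset.range (sizeF f),
      (fun i => ((i : ℕ), i)) a = (fun i => (i, i)) b → a = b := by
    intro a _ b _ h
    simpa using congrArg Prod.fst h
  have h2 : (Finset.range (sizeF f)).filter
      (fun i => ∀ p ∈ idMap (sizeF f), p.1 ≠ i) = ∅ := by
    rw [Finset.filter_eq_empty_iff]
    intro i hi hcon
    exact hcon (i, i) (Finset.mem_image.mpr ⟨i, hi, rfl⟩) rfl
  have h3 : (Finset.range (sizeF g)).filter
      (fun j => ∀ p ∈ idMap (sizeF f), p.2 ≠ j) = ∅ := by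
    rw [Finset.filter_eq_empty_iff]
    intro i hi hcon
    exact hcon (i, i) (Finset.mem_image.mpr ⟨i, by rwa [hfg] at hi, rfl⟩) rfl
  unfold costF idMap
  rw [Finset.sum_image hinj]
  rw [show ((Finset.range (sizeF f)).image fun i => (i, i)) = idMap (sizeF f) from rfl]
  rw [h2, h3]
  simp

end PTree
namespace PTree
variable {X : Type} {c : Option X → Option X → ℝ}

lemma cost_rep_le (hc : IsPseudoMetric c) {f g : List (PTree X)} {l l' : X} {k : ℕ}
    (hk : k < sizeF f) (hget : (preorderF f)[k]? = some l)
    (hpre : preorderF g = (preorderF f).set k l')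
    (y : List (PTree X)) {N : Finset (ℕ × ℕ)}
    (huniq : ∀ p ∈ N, ∀ q ∈ N, p.1 = q.1 → p = q) :
    costF c f y N ≤ c (some l) (some l') + costF c g y N := by
  obtain ⟨hpos, hsymm, hdiag, htri⟩ := hc
  have hsg : sizeF g = sizeF f := by rw [sizeF, hpre, List.length_set]; rfl
  have hgetne : ∀ i, i ≠ k → (preorderF g)[i]? = (preorderF f)[i]? := fun i hi => by
    rw [hpre, List.getElem?_set_ne (Ne.symm hi)]
  have hgetk : (preorderF g)[k]? = some l' := by
    rw [hpre, List.getElem?_set_self (by simpa [sizeF] using hk)]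
  unfold costF
  rw [hsg]
  by_cases hex : ∃ p ∈ N, p.1 = k
  · obtain ⟨p₀, hp₀, hp₀1⟩ := hex
    have e1f : (∑ p ∈ N, c (preorderF f)[p.1]? (preorderF y)[p.2]?)
        = c (some l) (preorderF y)[p₀.2]?
          + ∑ p ∈ N.erase p₀, c (preorderF f)[p.1]? (preorderF y)[p.2]? := by
      rw [← Finset.add_sum_erase N _ hp₀, hp₀1, hget]
    have e1g : (∑ p ∈ N, c (preorderF g)[p.1]? (preorderF y)[p.2]?)
        = c (some l') (preorderF y)[p₀.2]?
          + ∑ p ∈ N.erase p₀, c (preorderF f)[p.1]? (preorderF y)[p.2]? := by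
      rw [← Finset.add_sum_erase N _ hp₀, hp₀1, hgetk]
      congr 1
      refine Finset.sum_congr rfl (fun p hp => ?_)
      rw [Finset.mem_erase] at hp
      have hne : p.1 ≠ k := fun hcon =>
        hp.1 (huniq p hp.2 p₀ hp₀ (hcon.trans hp₀1.symm))
      rw [hgetne p.1 hne]
    have e2 : (∑ i ∈ (Finset.range (sizeF f)).filter (fun i => ∀ p ∈ N, p.1 ≠ i),
          c (preorderF g)[i]? none)
        = ∑ i ∈ (Finset.range (sizeF f)).filter (fun i => ∀ p ∈ N, p.1 ≠ i),
          c (preorderF f)[i]? none := by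
      refine Finset.sum_congr rfl (fun i hi => ?_)
      rw [Finset.mem_filter] at hi
      have : i ≠ k := fun hcon => hi.2 p₀ hp₀ (hp₀1.trans hcon.symm)
      rw [hgetne i this]
    rw [e1f, e1g, e2]
    have ht := htri (some l) (some l') (preorderF y)[p₀.2]?
    linarith
  · push_neg at hex
    have e1 : (∑ p ∈ N, c (preorderF g)[p.1]? (preorderF y)[p.2]?)
        = ∑ p ∈ N, c (preorderF f)[p.1]? (preorderF y)[p.2]? := by
      refine Finset.sum_congr rfl (fun p hp => ?_)
      rw [hgetne p.1 (hex p hp)]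
    have hkmem : k ∈ (Finset.range (sizeF f)).filter (fun i => ∀ p ∈ N, p.1 ≠ i) := by
      rw [Finset.mem_filter, Finset.mem_range]
      exact ⟨hk, hex⟩
    have e2f : (∑ i ∈ (Finset.range (sizeF f)).filter (fun i => ∀ p ∈ N, p.1 ≠ i),
          c (preorderF f)[i]? none)
        = c (some l) none + ∑ i ∈ ((Finset.range (sizeF f)).filter
            (fun i => ∀ p ∈ N, p.1 ≠ i)).erase k, c (preorderF f)[i]? none := by
      rw [← Finset.add_sum_erase _ _ hkmem, hget]
    have e2g : (∑ i ∈ (Finset.range (sizeF f)).filter (fun i => ∀ p ∈ N, p.1 ≠ i),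
          c (preorderF g)[i]? none)
        = c (some l') none + ∑ i ∈ ((Finset.range (sizeF f)).filter
            (fun i => ∀ p ∈ N, p.1 ≠ i)).erase k, c (preorderF f)[i]? none := by
      rw [← Finset.add_sum_erase _ _ hkmem, hgetk]
      congr 1
      refine Finset.sum_congr rfl (fun i hi => ?_)
      rw [Finset.mem_erase] at hi
      rw [hgetne i hi.1]
    rw [e1, e2f, e2g]
    have ht := htri (some l) (some l') none
    linarith

lemma cost_ins_le (hc : IsPseudoMetric c) {f g : List (PTree X)} {l : X} {k : ℕ}
    (h : DelData g f l k) (y : List (PTree X)) {N : Finset (ℕ × ℕ)}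
    (hN : IsMapF g y N) :
    costF c f y ((N.filter (fun p => p.1 ≠ k)).image (fun p => (delta k p.1, p.2)))
      ≤ c none (some l) + costF c g y N := by
  obtain ⟨hpos, hsymm, hdiag, htri⟩ := hc
  have hszeq := h.size_eq
  have hk := h.1
  have hgetk : (preorderF g)[k]? = some l := h.2.1
  have hget : ∀ m, (preorderF f)[m]? = (preorderF g)[psi k m]? := h.get
  set M := (N.filter (fun p => p.1 ≠ k)).image (fun p => (delta k p.1, p.2)) with hMdef
  have hinj : ∀ p ∈ N.filter (fun p => p.1 ≠ k), ∀ q ∈ N.filter (fun p => p.1 ≠ k),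
      (fun p : ℕ × ℕ => (delta k p.1, p.2)) p = (fun p : ℕ × ℕ => (delta k p.1, p.2)) q
        → p = q := by
    intro p hp q hq hpq
    rw [Finset.mem_filter] at hp hq
    simp only [Prod.mk.injEq] at hpq
    refine Prod.ext ?_ hpq.2
    rw [← psi_delta hp.2, ← psi_delta hq.2, hpq.1]
  -- first sum
  have hS1 : (∑ p ∈ M, c (preorderF f)[p.1]? (preorderF y)[p.2]?)
      = ∑ p ∈ N.filter (fun p => p.1 ≠ k), c (preorderF g)[p.1]? (preorderF y)[p.2]? := by
    rw [hMdef, Finset.sum_image hinj]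
    refine Finset.sum_congr rfl (fun p hp => ?_)
    rw [Finset.mem_filter] at hp
    rw [hget, psi_delta hp.2]
  -- second sum
  have hset2 : (Finset.range (sizeF f)).filter (fun i => ∀ p ∈ M, p.1 ≠ i)
      = (((Finset.range (sizeF g)).filter (fun m => ∀ p ∈ N, p.1 ≠ m)).filter
          (fun m => m ≠ k)).image (delta k) := by
    ext i
    simp only [Finset.mem_filter, Finset.mem_range, Finset.mem_image, hMdef]
    constructor
    · rintro ⟨hi, hun⟩
      refine ⟨psi k i, ⟨⟨by unfold psi; split_ifs <;> omega, ?_⟩, psi_ne k i⟩, delta_psi k i⟩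
      intro q hq hcon
      have hqk : q.1 ≠ k := by rw [hcon]; exact psi_ne k i
      refine hun (delta k q.1, q.2) ⟨q, ⟨hq, hqk⟩, rfl⟩ ?_
      show delta k q.1 = i
      rw [hcon, delta_psi]
    · rintro ⟨m, ⟨⟨hm, hun⟩, hmk⟩, rfl⟩
      refine ⟨by rw [hszeq]; exact delta_lt hm hmk hk, ?_⟩
      intro p hp
      obtain ⟨q, hq, rfl⟩ := hp
      show delta k q.1 ≠ delta k m
      intro hcon
      have : q.1 = m := by
        rw [← psi_delta hq.2, ← psi_delta hmk, hcon]
      exact hun q hq.1 this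
  have hS2 : (∑ i ∈ (Finset.range (sizeF f)).filter (fun i => ∀ p ∈ M, p.1 ≠ i),
        c (preorderF f)[i]? none)
      ≤ ∑ m ∈ (Finset.range (sizeF g)).filter (fun m => ∀ p ∈ N, p.1 ≠ m),
          c (preorderF g)[m]? none := by
    rw [hset2, Finset.sum_image (by
      intro a ha b hb hab
      rw [Finset.mem_coe, Finset.mem_filter] at ha hb
      rw [← psi_delta ha.2, ← psi_delta hb.2, hab])]
    have : ∀ m ∈ ((Finset.range (sizeF g)).filter (fun m => ∀ p ∈ N, p.1 ≠ m)).filter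
        (fun m => m ≠ k), c (preorderF f)[delta k m]? none = c (preorderF g)[m]? none := by
      intro m hm
      rw [Finset.mem_filter] at hm
      rw [hget, psi_delta hm.2]
    rw [Finset.sum_congr rfl this]
    exact Finset.sum_le_sum_of_subset_of_nonneg (Finset.filter_subset _ _)
      (fun i _ _ => hpos _ _)
  -- third sum
  by_cases hex : ∃ p ∈ N, p.1 = k
  · obtain ⟨p₀, hp₀, hp₀1⟩ := hex
    have hfilter : N.filter (fun p => p.1 ≠ k) = N.erase p₀ := by
      ext q
      rw [Finset.mem_filter, Finset.mem_erase]
      constructor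
      · rintro ⟨hq, hqk⟩
        exact ⟨fun hcon => hqk (by rw [hcon, hp₀1]), hq⟩
      · rintro ⟨hq1, hq2⟩
        exact ⟨hq2, fun hcon => hq1 (hN.uniq1 hq2 hp₀ (hcon.trans hp₀1.symm))⟩
    have hS1' : (∑ p ∈ N.filter (fun p => p.1 ≠ k),
          c (preorderF g)[p.1]? (preorderF y)[p.2]?)
        = (∑ p ∈ N, c (preorderF g)[p.1]? (preorderF y)[p.2]?)
          - c (some l) (preorderF y)[p₀.2]? := by
      rw [hfilter, ← Finset.add_sum_erase N _ hp₀, hp₀1, hgetk]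
      ring
    have hset3 : (Finset.range (sizeF y)).filter (fun j => ∀ p ∈ M, p.2 ≠ j)
        = insert p₀.2 ((Finset.range (sizeF y)).filter (fun j => ∀ p ∈ N, p.2 ≠ j)) := by
      ext j
      simp only [Finset.mem_filter, Finset.mem_range, Finset.mem_insert, hMdef]
      constructor
      · rintro ⟨hj, hun⟩
        by_cases hjp : j = p₀.2
        · exact Or.inl hjp
        · refine Or.inr ⟨hj, fun q hq hcon => ?_⟩
          have hqk : q.1 ≠ k := fun hqq => hjp (by
            have : q = p₀ := hN.uniq1 hq hp₀ (hqq.trans hp₀1.symm)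
            rw [← hcon, this])
          exact hun (delta k q.1, q.2)
            (Finset.mem_image.mpr ⟨q, Finset.mem_filter.mpr ⟨hq, hqk⟩, rfl⟩) hcon
      · rintro (rfl | ⟨hj, hun⟩)
        · refine ⟨(hN.1 p₀ hp₀).2, ?_⟩
          intro p hp
          obtain ⟨q, hq, rfl⟩ := Finset.mem_image.mp hp
          rw [Finset.mem_filter] at hq
          show q.2 ≠ p₀.2
          intro hcon
          exact hq.2 (by rw [congrArg Prod.fst (hN.uniq2 hq.1 hp₀ hcon), hp₀1])
        · refine ⟨hj, ?_⟩
          intro p hp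
          obtain ⟨q, hq, rfl⟩ := Finset.mem_image.mp hp
          rw [Finset.mem_filter] at hq
          exact hun q hq.1
    have hnotmem : p₀.2 ∉ (Finset.range (sizeF y)).filter (fun j => ∀ p ∈ N, p.2 ≠ j) := by
      rw [Finset.mem_filter]
      rintro ⟨-, hun⟩
      exact hun p₀ hp₀ rfl
    have hS3 : (∑ j ∈ (Finset.range (sizeF y)).filter (fun j => ∀ p ∈ M, p.2 ≠ j),
          c none (preorderF y)[j]?)
        = c none (preorderF y)[p₀.2]?
          + ∑ j ∈ (Finset.range (sizeF y)).filter (fun j => ∀ p ∈ N, p.2 ≠ j),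
            c none (preorderF y)[j]? := by
      rw [hset3, Finset.sum_insert hnotmem]
    have ht := htri none (some l) (preorderF y)[p₀.2]?
    have hs := hsymm none (some l)
    unfold costF
    rw [hS1, hS1', hS3]
    have := hsymm (some l) none
    linarith [hS2]
  · push_neg at hex
    have hfilter : N.filter (fun p => p.1 ≠ k) = N :=
      Finset.filter_true_of_mem (fun p hp => hex p hp)
    have hset3 : (Finset.range (sizeF y)).filter (fun j => ∀ p ∈ M, p.2 ≠ j)
        = (Finset.range (sizeF y)).filter (fun j => ∀ p ∈ N, p.2 ≠ j) := by
      ext j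
      simp only [Finset.mem_filter, Finset.mem_range, hMdef]
      constructor
      · rintro ⟨hj, hun⟩
        refine ⟨hj, fun q hq => ?_⟩
        exact hun (delta k q.1, q.2)
          (Finset.mem_image.mpr ⟨q, Finset.mem_filter.mpr ⟨hq, hex q hq⟩, rfl⟩)
      · rintro ⟨hj, hun⟩
        refine ⟨hj, ?_⟩
        intro p hp
        obtain ⟨q, hq, rfl⟩ := Finset.mem_image.mp hp
        rw [Finset.mem_filter] at hq
        exact hun q hq.1
    unfold costF
    rw [hS1, hfilter, hset3]
    have := hpos none (some l)
    linarith [hS2]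

end PTree
namespace PTree
variable {X : Type} {c : Option X → Option X → ℝ}

lemma getD_le_of_anc (f g : List (PTree X)) (hn : sizeF f = sizeF g)
    (h : ∀ i j, i < sizeF f → j < sizeF f → (AncF g i j → AncF f i j)) :
    ∀ i < sizeF f, (subtreeSizesF g).getD i 0 ≤ (subtreeSizesF f).getD i 0 := by
  intro i hi
  by_contra hlt
  push_neg at hlt
  have hA : 0 < (subtreeSizesF f).getD i 0 := sizesF_pos f i hi
  have hfit : i + (subtreeSizesF g).getD i 0 ≤ sizeF g := fitsF g i (hn ▸ hi)
  set A := (subtreeSizesF f).getD i 0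
  set j := i + A with hj
  have hjlt : j < sizeF f := by omega
  have hanc : AncF g i j := ⟨by omega, by omega⟩
  have := (h i j hi hjlt hanc).2
  omega

lemma sizesF_eq_of_anc {f g : List (PTree X)} (hn : sizeF f = sizeF g)
    (h : ∀ i j, i < sizeF f → j < sizeF f → (AncF f i j ↔ AncF g i j)) :
    subtreeSizesF f = subtreeSizesF g := by
  have hlen : (subtreeSizesF f).length = (subtreeSizesF g).length := by
    rw [length_subtreeSizesF, length_subtreeSizesF, hn]
  refine List.ext_getElem hlen (fun i h1 h2 => ?_)
  have hif : i < sizeF f := by rwa [length_subtreeSizesF] at h1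
  have l1 := getD_le_of_anc f g hn (fun i j hi hj => (h i j hi hj).mpr) i hif
  have l2 := getD_le_of_anc g f hn.symm
    (fun i j hi hj => (h i j (by omega) (by omega)).mp) i (by omega)
  rw [List.getD_eq_getElem _ 0 h1, List.getD_eq_getElem _ 0 h2] at l1 l2
  omega

lemma full_spec {f g : List (PTree X)} {M : Finset (ℕ × ℕ)} (hM : IsMapF f g M)
    (h1 : ∀ i < sizeF f, ∃ p ∈ M, p.1 = i) (h2 : ∀ j < sizeF g, ∃ p ∈ M, p.2 = j) :
    sizeF f = sizeF g ∧ M = idMap (sizeF f) ∧ subtreeSizesF f = subtreeSizesF g := by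
  have hdiag : ∀ p ∈ M, p.2 = p.1 := by
    intro p hp
    have hc1 : (M.filter (fun q => q.1 < p.1)).card = p.1 := by
      have himg : (M.filter (fun q => q.1 < p.1)).image (fun q => q.1)
          = Finset.range p.1 := by
        ext i
        simp only [Finset.mem_image, Finset.mem_filter, Finset.mem_range]
        constructor
        · rintro ⟨q, ⟨hqM, hqlt⟩, rfl⟩
          exact hqlt
        · intro hi
          obtain ⟨q, hq, hq1⟩ := h1 i (by have := (hM.1 p hp).1; omega)
          exact ⟨q, ⟨hq, by omega⟩, hq1⟩
      have hcard := Finset.card_image_of_injOn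
        (f := fun q : ℕ × ℕ => q.1) (s := M.filter (fun q => q.1 < p.1))
        (fun a ha b hb hab => hM.uniq1 (Finset.mem_filter.mp ha).1
          (Finset.mem_filter.mp hb).1 hab)
      rw [himg, Finset.card_range] at hcard
      exact hcard.symm
    have hc2 : (M.filter (fun q => q.2 < p.2)).card = p.2 := by
      have himg : (M.filter (fun q => q.2 < p.2)).image (fun q => q.2)
          = Finset.range p.2 := by
        ext i
        simp only [Finset.mem_image, Finset.mem_filter, Finset.mem_range]
        constructor
        · rintro ⟨q, ⟨hqM, hqlt⟩, rfl⟩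
          exact hqlt
        · intro hi
          obtain ⟨q, hq, hq2⟩ := h2 i (by have := (hM.1 p hp).2; omega)
          exact ⟨q, ⟨hq, by omega⟩, hq2⟩
      have hcard := Finset.card_image_of_injOn
        (f := fun q : ℕ × ℕ => q.2) (s := M.filter (fun q => q.2 < p.2))
        (fun a ha b hb hab => hM.uniq2 (Finset.mem_filter.mp ha).1
          (Finset.mem_filter.mp hb).1 hab)
      rw [himg, Finset.card_range] at hcard
      exact hcard.symm
    have hfeq : M.filter (fun q => q.1 < p.1) = M.filter (fun q => q.2 < p.2) := by
      ext q
      rw [Finset.mem_filter, Finset.mem_filter]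
      constructor
      · rintro ⟨hq, hlt⟩
        exact ⟨hq, (hM.2 q hq p hp).2.1.mp hlt⟩
      · rintro ⟨hq, hlt⟩
        exact ⟨hq, (hM.2 q hq p hp).2.1.mpr hlt⟩
    rw [← hc1, ← hc2, hfeq]
  have hsz : sizeF f = sizeF g := by
    by_contra hne
    rcases Nat.lt_or_ge (sizeF f) (sizeF g) with hlt | hge
    · obtain ⟨p, hp, hp2⟩ := h2 (sizeF f) hlt
      have := (hM.1 p hp).1
      have := hdiag p hp
      omega
    · have hlt : sizeF g < sizeF f := by omega
      obtain ⟨p, hp, hp1⟩ := h1 (sizeF g) hlt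
      have := (hM.1 p hp).2
      have := hdiag p hp
      omega
  have hid : M = idMap (sizeF f) := by
    ext p
    unfold idMap
    rw [Finset.mem_image]
    constructor
    · intro hp
      refine ⟨p.1, Finset.mem_range.mpr (hM.1 p hp).1, ?_⟩
      have := hdiag p hp
      exact Prod.ext rfl this.symm
    · rintro ⟨i, hi, rfl⟩
      rw [Finset.mem_range] at hi
      obtain ⟨q, hq, hq1⟩ := h1 i hi
      have := hdiag q hq
      have : q = (i, i) := Prod.ext hq1 (by omega)
      rwa [← this]
  have hanc : ∀ i j, i < sizeF f → j < sizeF f → (AncF f i j ↔ AncF g i j) := by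
    intro i j hi hj
    have hmi : (i, i) ∈ M := by
      rw [hid]
      exact Finset.mem_image.mpr ⟨i, Finset.mem_range.mpr hi, rfl⟩
    have hmj : (j, j) ∈ M := by
      rw [hid]
      exact Finset.mem_image.mpr ⟨j, Finset.mem_range.mpr hj, rfl⟩
    exact (hM.2 (i, i) hmi (j, j) hmj).2.2
  exact ⟨hsz, hid, sizesF_eq_of_anc hsz hanc⟩

lemma zip_sum (c : Option X → Option X → ℝ) :
    ∀ (A B : List X), A.length = B.length →
      (List.zipWith (fun a b => c (some a) (some b)) A B).sum
        = ∑ i ∈ Finset.range A.length, c A[i]? B[i]? := by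
  intro A
  induction A with
  | nil => intro B h; simp
  | cons a A ih =>
    intro B h
    cases B with
    | nil => simp at h
    | cons b B =>
      simp only [List.zipWith_cons_cons, List.sum_cons, List.length_cons]
      rw [Finset.sum_range_succ', ih B (by simpa using h)]
      simp [add_comm]

end PTree
namespace PTree
variable {X : Type} {c : Option X → Option X → ℝ}

lemma sizeF_eq_zero {f : List (PTree X)} (h : sizeF f = 0) : f = [] := by
  cases f with
  | nil => rfl
  | cons t ts =>
    exfalso
    have := size_pos t
    simp at h
    omega

theorem script_of_mapF (c : Option X → Option X → ℝ) :
    ∀ (n : ℕ) (f g : List (PTree X)) (M : Finset (ℕ × ℕ)),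
      sizeF f + sizeF g ≤ n → IsMapF f g M → Script c f g (costF c f g M) := by
  intro n
  induction n with
  | zero =>
    intro f g M hn hM
    have hf : f = [] := sizeF_eq_zero (by omega)
    have hg : g = [] := sizeF_eq_zero (by omega)
    subst hf; subst hg
    have hM0 : M = ∅ := by
      refine Finset.eq_empty_of_forall_notMem (fun p hp => ?_)
      have := (hM.1 p hp).1
      simp [sizeF] at this
    subst hM0
    have : costF c ([] : List (PTree X)) [] ∅ = 0 := by
      unfold costF
      simp [sizeF]
    rw [this]
    exact Script.nil []
  | succ n IH =>
    intro f g M hn hM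
    by_cases hFX : ((Finset.range (sizeF f)).filter (fun i => ∀ p ∈ M, p.1 ≠ i)).Nonempty
    · obtain ⟨k, hkmem⟩ := hFX
      rw [Finset.mem_filter, Finset.mem_range] at hkmem
      obtain ⟨hk, hun⟩ := hkmem
      obtain ⟨g', l, hd, hdat⟩ := deletes_exists_f f k hk
      set N := M.image (fun p : ℕ × ℕ => (delta k p.1, p.2)) with hN
      have hMfilter : M.filter (fun p => p.1 ≠ k) = M :=
        Finset.filter_true_of_mem (fun p hp => hun p hp)
      have hNmap : IsMapF g' g N := by
        have := isMapF_ins hdat hM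
        rwa [hMfilter] at this
      have hMN : N.image (fun p : ℕ × ℕ => (psi k p.1, p.2)) = M := by
        rw [hN, Finset.image_image]
        have : M.image ((fun p : ℕ × ℕ => (psi k p.1, p.2))
            ∘ (fun p : ℕ × ℕ => (delta k p.1, p.2))) = M.image id := by
          refine Finset.image_congr (fun p hp => ?_)
          show (psi k (delta k p.1), p.2) = p
          rw [psi_delta (hun p hp)]
        rw [this, Finset.image_id]
      have key := cost_del (c := c) hdat g N
      rw [hMN] at key
      have hsg' := hdat.size_eq
      have hscript := IH g' g N (by omega) hNmap
      have hres := Script.cons (EditStep.del hd) hscript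
      rwa [← key] at hres
    · by_cases hFY : ((Finset.range (sizeF g)).filter (fun j => ∀ p ∈ M, p.2 ≠ j)).Nonempty
      · obtain ⟨k, hkmem⟩ := hFY
        rw [Finset.mem_filter, Finset.mem_range] at hkmem
        obtain ⟨hk, hun⟩ := hkmem
        obtain ⟨g'', l, hd, hdat⟩ := deletes_exists_f g k hk
        set N := M.image (fun p : ℕ × ℕ => (p.1, delta k p.2)) with hN
        have hswap : IsMapF g f (M.image Prod.swap) := isMapF_swap hM
        have hfeq : (M.image Prod.swap).filter (fun p => p.1 ≠ k) = M.image Prod.swap := by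
          refine Finset.filter_true_of_mem (fun p hp => ?_)
          obtain ⟨q, hq, rfl⟩ := Finset.mem_image.mp hp
          exact hun q hq
        have h2 := isMapF_ins hdat hswap
        rw [hfeq] at h2
        have hcomp : ((M.image Prod.swap).image (fun p : ℕ × ℕ => (delta k p.1, p.2)))
            = N.image Prod.swap := by
          rw [Finset.image_image, hN, Finset.image_image]
          rfl
        rw [hcomp] at h2
        have hNmap : IsMapF f g'' N := by
          have h3 := isMapF_swap h2
          rwa [Finset.image_image,
            show Prod.swap ∘ (Prod.swap : ℕ × ℕ → ℕ × ℕ) = id from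
              funext (fun p => Prod.swap_swap p), Finset.image_id] at h3
      -- cost identity
        have key : costF c f g M = c none (some l) + costF c f g'' N := by
          rw [costF_swap c f g M]
          have hMT : (N.image Prod.swap).image (fun p : ℕ × ℕ => (psi k p.1, p.2))
              = M.image Prod.swap := by
            rw [Finset.image_image, hN, Finset.image_image]
            refine Finset.image_congr (fun p hp => ?_)
            show (psi k (delta k p.2), p.1) = p.swap
            rw [psi_delta (hun p hp)]
            rfl
          have hcd := cost_del (c := fun a b => c b a) hdat f (N.image Prod.swap)
          rw [hMT] at hcd
          rw [hcd, ← costF_swap c f g'' N]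
        have hsg'' := hdat.size_eq
        have hscript := IH f g'' N (by omega) hNmap
        have hstep : Script c g'' g (c none (some l)) := Script.single (EditStep.ins hd)
        have hres := hscript.trans hstep
        rw [key, add_comm]
        exact hres
      · rw [Finset.not_nonempty_iff_eq_empty, Finset.filter_eq_empty_iff] at hFX hFY
        have h1 : ∀ i < sizeF f, ∃ p ∈ M, p.1 = i := by
          intro i hi
          have := hFX (Finset.mem_range.mpr hi)
          push_neg at this
          obtain ⟨p, hp, hpe⟩ := this
          exact ⟨p, hp, by simpa using hpe⟩
        have h2 : ∀ j < sizeF g, ∃ p ∈ M, p.2 = j := by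
          intro j hj
          have := hFY (Finset.mem_range.mpr hj)
          push_neg at this
          obtain ⟨p, hp, hpe⟩ := this
          exact ⟨p, hp, by simpa using hpe⟩
        obtain ⟨hsz, hid, hsizes⟩ := full_spec hM h1 h2
        have hscript := scriptRep_f (c := c) f g hsizes
        rw [zip_sum c (preorderF f) (preorderF g) hsz] at hscript
        rw [hid, costF_idMap c f g hsz.symm]
        exact hscript

theorem map_of_script (hc : IsPseudoMetric c) {f g : List (PTree X)} {r : ℝ}
    (h : Script c f g r) : ∃ M, IsMapF f g M ∧ costF c f g M ≤ r := by
  induction h with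
  | nil f =>
    refine ⟨idMap (sizeF f), isMapF_id f, ?_⟩
    rw [costF_idMap c f f rfl]
    apply le_of_eq
    apply Finset.sum_eq_zero
    intro i _
    exact hc.2.2.1 _
  | cons e hs ih =>
    obtain ⟨N, hN, hNc⟩ := ih
    cases e with
    | del hd =>
      obtain ⟨k, hdat⟩ := deletes_spec hd
      refine ⟨N.image (fun p => (psi k p.1, p.2)), isMapF_del hdat hN, ?_⟩
      rw [cost_del hdat _ N]
      exact add_le_add_right hNc _
    | ins hd =>
      obtain ⟨k, hdat⟩ := deletes_spec hd
      exact ⟨_, isMapF_ins hdat hN,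
        le_trans (cost_ins_le hc hdat _ hN) (add_le_add_right hNc _)⟩
    | rep hr =>
      obtain ⟨k, hk, hget, hpre, hsz⟩ := replaces_spec hr
      refine ⟨N, isMapF_of_sizes_eq hsz.symm hN, ?_⟩
      exact le_trans (cost_rep_le hc hk hget hpre _ (fun p hp q hq => hN.uniq1 hp hq))
        (add_le_add_right hNc _)

end PTree
namespace PTree
variable {X : Type} {c : Option X → Option X → ℝ}

@[simp] lemma preorderF_single (t : PTree X) : preorderF [t] = preorder t := by simp
@[simp] lemma sizeF_single (t : PTree X) : sizeF [t] = size t := by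
  simp [sizeF, size]
@[simp] lemma subtreeSizesF_single (t : PTree X) : subtreeSizesF [t] = subtreeSizes t := by
  simp

lemma ancF_single (t : PTree X) (i j : ℕ) : AncF [t] i j ↔ IsAncestor t i j := by
  unfold AncF IsAncestor
  rw [subtreeSizesF_single]

lemma get_single (x : PTree X) (i : Fin (size x)) :
    (preorderF [x])[(i : ℕ)]? = some (label x i) := by
  rw [preorderF_single]
  unfold label
  exact List.getElem?_eq_getElem i.isLt

lemma fin_pair_inj {a b : ℕ} : ∀ (p q : Fin a × Fin b),
    ((p.1 : ℕ), (p.2 : ℕ)) = ((q.1 : ℕ), (q.2 : ℕ)) → p = q := by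
  intro p q h
  simp only [Prod.mk.injEq] at h
  exact Prod.ext (Fin.val_injective h.1) (Fin.val_injective h.2)

lemma tree_to_forest (c : Option X → Option X → ℝ) (x y : PTree X)
    (M : Finset (Fin (size x) × Fin (size y))) (hM : IsTreeMapping x y M) :
    IsMapF [x] [y] (M.image (fun p => ((p.1 : ℕ), (p.2 : ℕ))))
      ∧ mappingCost c x y M
        = costF c [x] [y] (M.image (fun p => ((p.1 : ℕ), (p.2 : ℕ)))) := by
  set M' := M.image (fun p : Fin (size x) × Fin (size y) => ((p.1 : ℕ), (p.2 : ℕ)))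
    with hM'
  constructor
  · constructor
    · intro p hp
      obtain ⟨q, hq, rfl⟩ := Finset.mem_image.mp hp
      exact ⟨by rw [sizeF_single]; exact q.1.isLt, by rw [sizeF_single]; exact q.2.isLt⟩
    · intro p hp p' hp'
      obtain ⟨q, hq, rfl⟩ := Finset.mem_image.mp hp
      obtain ⟨q', hq', rfl⟩ := Finset.mem_image.mp hp'
      obtain ⟨h1, h2, h3⟩ := hM q hq q' hq'
      refine ⟨?_, ?_, ?_⟩
      · show (q.1 : ℕ) = q'.1 ↔ (q.2 : ℕ) = q'.2
        rw [Fin.val_eq_val, Fin.val_eq_val]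
        exact h1
      · exact h2
      · rw [ancF_single, ancF_single]
        exact h3
  · unfold mappingCost costF
    have hinj : ∀ p ∈ M, ∀ q ∈ M,
        (fun p : Fin (size x) × Fin (size y) => ((p.1 : ℕ), (p.2 : ℕ))) p
          = (fun p : Fin (size x) × Fin (size y) => ((p.1 : ℕ), (p.2 : ℕ))) q → p = q :=
      fun p _ q _ h => fin_pair_inj p q h
    have e1 : (∑ p ∈ M', c (preorderF [x])[p.1]? (preorderF [y])[p.2]?)
        = ∑ p ∈ M, c (some (label x p.1)) (some (label y p.2)) := by
      rw [hM', Finset.sum_image hinj]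
      exact Finset.sum_congr rfl (fun p _ => by rw [get_single, get_single])
    have e2set : (Finset.range (sizeF [x])).filter (fun i => ∀ p ∈ M', p.1 ≠ i)
        = (Finset.univ.filter (fun i : Fin (size x) => ∀ p ∈ M, p.1 ≠ i)).image
            Fin.val := by
      ext i
      simp only [Finset.mem_filter, Finset.mem_range, Finset.mem_image, Finset.mem_univ,
        true_and, hM', sizeF_single]
      constructor
      · rintro ⟨hi, hun⟩
        refine ⟨⟨i, hi⟩, fun p hp hcon => ?_, rfl⟩
        exact hun ((p.1 : ℕ), (p.2 : ℕ)) ⟨p, hp, rfl⟩ (by rw [hcon])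
      · rintro ⟨ifin, hun, rfl⟩
        refine ⟨ifin.isLt, ?_⟩
        intro p hp
        obtain ⟨q, hq, rfl⟩ := hp
        show (q.1 : ℕ) ≠ ifin
        intro hcon
        exact hun q hq (Fin.val_injective hcon)
    have e2 : (∑ i ∈ (Finset.range (sizeF [x])).filter (fun i => ∀ p ∈ M', p.1 ≠ i),
          c (preorderF [x])[i]? none)
        = ∑ i ∈ Finset.univ.filter (fun i : Fin (size x) => ∀ p ∈ M, p.1 ≠ i),
            c (some (label x i)) none := by
      rw [e2set, Finset.sum_image (fun a _ b _ h => Fin.val_injective h)]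
      exact Finset.sum_congr rfl (fun i _ => by rw [get_single])
    have e3set : (Finset.range (sizeF [y])).filter (fun j => ∀ p ∈ M', p.2 ≠ j)
        = (Finset.univ.filter (fun j : Fin (size y) => ∀ p ∈ M, p.2 ≠ j)).image
            Fin.val := by
      ext j
      simp only [Finset.mem_filter, Finset.mem_range, Finset.mem_image, Finset.mem_univ,
        true_and, hM', sizeF_single]
      constructor
      · rintro ⟨hj, hun⟩
        refine ⟨⟨j, hj⟩, fun p hp hcon => ?_, rfl⟩
        exact hun ((p.1 : ℕ), (p.2 : ℕ)) ⟨p, hp, rfl⟩ (by rw [hcon])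
      · rintro ⟨jfin, hun, rfl⟩
        refine ⟨jfin.isLt, ?_⟩
        intro p hp
        obtain ⟨q, hq, rfl⟩ := hp
        show (q.2 : ℕ) ≠ jfin
        intro hcon
        exact hun q hq (Fin.val_injective hcon)
    have e3 : (∑ j ∈ (Finset.range (sizeF [y])).filter (fun j => ∀ p ∈ M', p.2 ≠ j),
          c none (preorderF [y])[j]?)
        = ∑ j ∈ Finset.univ.filter (fun j : Fin (size y) => ∀ p ∈ M, p.2 ≠ j),
            c none (some (label y j)) := by
      rw [e3set, Finset.sum_image (fun a _ b _ h => Fin.val_injective h)]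
      exact Finset.sum_congr rfl (fun j _ => by rw [get_single])
    rw [e1, e2, e3]

lemma forest_to_tree (c : Option X → Option X → ℝ) (x y : PTree X)
    {N : Finset (ℕ × ℕ)} (hN : IsMapF [x] [y] N) :
    ∃ MF : Finset (Fin (size x) × Fin (size y)),
      IsTreeMapping x y MF ∧ mappingCost c x y MF = costF c [x] [y] N := by
  classical
  set MF := Finset.univ.filter
    (fun q : Fin (size x) × Fin (size y) => ((q.1 : ℕ), (q.2 : ℕ)) ∈ N) with hMF
  have himg : MF.image (fun p : Fin (size x) × Fin (size y) => ((p.1 : ℕ), (p.2 : ℕ)))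
      = N := by
    ext p
    rw [Finset.mem_image]
    constructor
    · rintro ⟨q, hq, rfl⟩
      rw [hMF, Finset.mem_filter] at hq
      exact hq.2
    · intro hp
      have hb := hN.1 p hp
      rw [sizeF_single, sizeF_single] at hb
      refine ⟨(⟨p.1, hb.1⟩, ⟨p.2, hb.2⟩), ?_, rfl⟩
      rw [hMF, Finset.mem_filter]
      exact ⟨Finset.mem_univ _, by simpa using hp⟩
  have htm : IsTreeMapping x y MF := by
    intro p hp q hq
    rw [hMF, Finset.mem_filter] at hp hq
    obtain ⟨h1, h2, h3⟩ := hN.2 _ hp.2 _ hq.2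
    refine ⟨?_, h2, ?_⟩
    · show p.1 = q.1 ↔ p.2 = q.2
      rw [← Fin.val_eq_val, ← Fin.val_eq_val]
      exact h1
    · rw [← ancF_single x, ← ancF_single y]
      exact h3
  refine ⟨MF, htm, ?_⟩
  have := (tree_to_forest c x y MF htm).2
  rwa [himg] at this

lemma mappingCost_nonneg (hc : ∀ a b, 0 ≤ c a b) (x y : PTree X)
    (M : Finset (Fin (size x) × Fin (size y))) : 0 ≤ mappingCost c x y M := by
  unfold mappingCost
  have n1 : (0:ℝ) ≤ ∑ p ∈ M, c (some (label x p.1)) (some (label y p.2)) :=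
    Finset.sum_nonneg (fun p _ => hc _ _)
  have n2 : (0:ℝ) ≤ ∑ i ∈ Finset.univ.filter (fun i : Fin (size x) => ∀ p ∈ M, p.1 ≠ i),
      c (some (label x i)) none := Finset.sum_nonneg (fun p _ => hc _ _)
  have n3 : (0:ℝ) ≤ ∑ j ∈ Finset.univ.filter (fun j : Fin (size y) => ∀ p ∈ M, p.2 ≠ j),
      c none (some (label y j)) := Finset.sum_nonneg (fun p _ => hc _ _)
  linarith

end PTree
/-- Let `X` be a finite alphabet and `c₀` a pseudo-metric on
`X ∪ {−}`. The matrix `P_{c₀}(x̄, ȳ)` encoding a cheapest edit script under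
`c₀` is represented by a tree mapping `M` between `x̄` and `ȳ` of minimal cost
under `c₀` (replaced pairs are the matched pairs, deletions the unmatched
nodes of `x̄`, insertions the unmatched nodes of `ȳ`); the pseudo edit
distance `d̃_c(x̄, ȳ)` is then the cost of `M` under `c`. The pseudo edit
distance evaluated at the default cost function equals the true tree edit
distance: `d̃_{c₀}(x̄, ȳ) = d_{c₀}(x̄, ȳ)`. -/
theorem pseudoEditDist_default_eq_editDist (X : Type) [Fintype X]
    (c₀ : Option X → Option X → ℝ) (hc₀ : IsPseudoMetric c₀) (x y : PTree X)
    (M : Finset (Fin (PTree.size x) × Fin (PTree.size y)))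
    (hM : PTree.IsTreeMapping x y M)
    (hopt : PTree.mappingCost c₀ x y M = PTree.mapDist c₀ x y) :
    PTree.mappingCost c₀ x y M = PTree.editDist c₀ x y := by
  classical
  obtain ⟨hmap', hcost'⟩ := PTree.tree_to_forest c₀ x y M hM
  set M' := M.image
    (fun p : Fin (PTree.size x) × Fin (PTree.size y) => ((p.1 : ℕ), (p.2 : ℕ))) with hM'def
  have hscript : PTree.Script c₀ [x] [y] (PTree.costF c₀ [x] [y] M') :=
    PTree.script_of_mapF c₀ (PTree.sizeF [x] + PTree.sizeF [y]) [x] [y] M' le_rfl hmap'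
  have hmem : PTree.costF c₀ [x] [y] M' ∈ {r : ℝ | PTree.Script c₀ [x] [y] r} := hscript
  have hbdd : BddBelow {r : ℝ | PTree.Script c₀ [x] [y] r} :=
    ⟨0, fun r hr => PTree.Script.nonneg hc₀.1 hr⟩
  have hub : PTree.editDist c₀ x y ≤ PTree.mappingCost c₀ x y M := by
    rw [hcost']
    exact csInf_le hbdd hmem
  have hlb : PTree.mappingCost c₀ x y M ≤ PTree.editDist c₀ x y := by
    apply le_csInf ⟨_, hmem⟩
    intro r hr
    obtain ⟨N, hN, hNc⟩ := PTree.map_of_script hc₀ hr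
    obtain ⟨MF, hMF, hMFc⟩ := PTree.forest_to_tree c₀ x y hN
    have h1 : PTree.mapDist c₀ x y ≤ PTree.mappingCost c₀ x y MF := by
      refine csInf_le ⟨0, ?_⟩ ⟨MF, hMF, rfl⟩
      rintro v ⟨Mv, hMv, rfl⟩
      exact PTree.mappingCost_nonneg hc₀.1 x y Mv
    calc PTree.mappingCost c₀ x y M = PTree.mapDist c₀ x y := hopt
      _ ≤ PTree.mappingCost c₀ x y MF := h1
      _ = PTree.costF c₀ [x] [y] N := hMFc
      _ ≤ r := hNc
  exact le_antisymm hlb hub
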